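/- Let f : (0,R] → ℝ be C¹ and bounded, with x f'(x) → 0 as x → 0⁺. Let u : B_R(0) ⊂ ℝⁿ → ℝ be the radial function u(x) = f(|x|). Then u ∈ VMO(B_R(0)): the modulus η*(r) := sup over x ∈ B_R(0) and 0 < σ < r of the mean square oscillation of u over B_σ(x) ∩ B_R(0) tends to 0 as r → 0. -/

import Mathlib

open MeasureTheory Metric Filter


lemma ftc_abs_le {f f' : ℝ → ℝ} {a b : ℝ} (hab : a ≤ b)
    (hd : ∀ t ∈ Set.Icc a b, HasDerivAt f (f' t) t)
    (hc : ContinuousOn f' (Set.Icc a b))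
    {g : ℝ → ℝ} (hg : ∀ t ∈ Set.Icc a b, |f' t| ≤ g t)
    (hgi : IntervalIntegrable g volume a b) :
    |f b - f a| ≤ |∫ t in a..b, g t| := by
  have hi : IntervalIntegrable f' volume a b := by
    apply ContinuousOn.intervalIntegrable
    rwa [Set.uIcc_of_le hab]
  rw [← intervalIntegral.integral_eq_sub_of_hasDerivAt (fun t ht => hd t (Set.uIcc_of_le hab ▸ ht)) hi]
  rw [← Real.norm_eq_abs (∫ (y : ℝ) in a..b, f' y)]
  refine le_trans ?_ (le_abs_self _)
  apply intervalIntegral.norm_integral_le_of_norm_le hab _ hgi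
  filter_upwards with t ht
  exact hg t (Set.Ioc_subset_Icc_self ht)

lemma lip_bound {f f' : ℝ → ℝ} {a b K : ℝ} (hab : a ≤ b)
    (hd : ∀ t ∈ Set.Icc a b, HasDerivAt f (f' t) t)
    (hc : ContinuousOn f' (Set.Icc a b))
    (hK : ∀ t ∈ Set.Icc a b, |f' t| ≤ K) :
    |f b - f a| ≤ K * (b - a) := by
  have h := ftc_abs_le hab hd hc hK intervalIntegrable_const
  rw [intervalIntegral.integral_const, smul_eq_mul] at h
  calc |f b - f a| ≤ |(b - a) * K| := h
    _ = |b - a| * |K| := abs_mul _ _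
    _ ≤ (b-a) * |K| := by rw [abs_of_nonneg (by linarith)]
    _ = K * (b-a) := by
        have hK0 : 0 ≤ K := le_trans (abs_nonneg _) (hK a (Set.left_mem_Icc.2 hab))
        rw [abs_of_nonneg hK0]; ring

lemma log_bound {f f' : ℝ → ℝ} {a b ε : ℝ} (ha : 0 < a) (hab : a ≤ b)
    (hd : ∀ t ∈ Set.Icc a b, HasDerivAt f (f' t) t)
    (hc : ContinuousOn f' (Set.Icc a b))
    (hε : ∀ t ∈ Set.Icc a b, |f' t| ≤ ε * t⁻¹) :
    |f b - f a| ≤ ε * Real.log (b / a) := by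
  have hεnn : 0 ≤ ε := by
    have := le_trans (abs_nonneg _) (hε a (Set.left_mem_Icc.2 hab))
    nlinarith [inv_pos.2 ha]
  have hgi : IntervalIntegrable (fun t => ε * t⁻¹) volume a b := by
    apply ContinuousOn.intervalIntegrable
    apply ContinuousOn.mul continuousOn_const
    apply ContinuousOn.inv₀ continuousOn_id
    intro t ht; rw [Set.uIcc_of_le hab] at ht; exact ne_of_gt (lt_of_lt_of_le ha ht.1)
  have h := ftc_abs_le hab hd hc hε hgi
  rw [intervalIntegral.integral_const_mul, integral_inv_of_pos ha (lt_of_lt_of_le ha hab)] at h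
  have hl : (0:ℝ) ≤ Real.log (b/a) := Real.log_nonneg ((one_le_div ha).2 hab)
  exact h.trans_eq (abs_of_nonneg (by positivity))


lemma osc_le {α : Type*} [MeasurableSpace α] (ν : Measure α) [IsFiniteMeasure ν]
    {g : α → ℝ} (hm : AEStronglyMeasurable g ν) {c B₁ B₂ θ : ℝ}
    (hB₁ : 0 ≤ B₁) (hB₂ : 0 ≤ B₂) (hθ : 0 ≤ θ) (hθ1 : θ ≤ 1)
    {T : Set α} (hTm : MeasurableSet T)
    (hT : ∀ᵐ y ∂ν, y ∈ T → |g y - c| ≤ B₁)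
    (hall : ∀ᵐ y ∂ν, |g y - c| ≤ B₂)
    (hfrac : (ν Tᶜ).toReal ≤ θ * (ν Set.univ).toReal) :
    ⨍ y, |g y - ⨍ z, g z ∂ν| ^ 2 ∂ν ≤ 6*B₁^2 + 6*B₂^2*θ := by
  by_cases hν0 : ν Set.univ = 0
  · rw [Measure.measure_univ_eq_zero] at hν0
    subst hν0
    simp [average_eq]
    positivity
  set V := (ν Set.univ).toReal with hV
  have hVpos : 0 < V := ENNReal.toReal_pos hν0 (measure_ne_top ν _)
  -- integrability
  have hgi : Integrable g ν := by
    apply Integrable.mono' (integrable_const (B₂ + |c|)) hm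
    filter_upwards [hall] with y hy
    rw [Real.norm_eq_abs]
    have := abs_sub_abs_le_abs_sub (g y) c
    linarith
  have h1 : Integrable (fun y => |g y - c|) ν := (hgi.sub (integrable_const c)).abs
  have hsm2 : ∀ m : ℝ, AEStronglyMeasurable (fun y => |g y - m| ^ 2) ν := by
    intro m
    have h := hm.sub (aestronglyMeasurable_const (b := m))
    have := h.mul h
    simpa [sq_abs, pow_two] using (show AEStronglyMeasurable (fun y => (g y - m) * (g y - m)) ν from this)
  have h2 : Integrable (fun y => |g y - c| ^ 2) ν := by
    apply Integrable.mono' (integrable_const (B₂ ^ 2)) (hsm2 c)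
    filter_upwards [hall] with y hy
    rw [Real.norm_eq_abs, abs_of_nonneg (by positivity)]
    exact pow_le_pow_left₀ (abs_nonneg _) hy 2
  -- splitting estimate
  have split : ∀ (h : α → ℝ) (b₁ b₂ : ℝ), Integrable h ν →
      (∀ᵐ y ∂ν, y ∈ T → h y ≤ b₁) → (∀ᵐ y ∂ν, h y ≤ b₂) → 0 ≤ b₁ → 0 ≤ b₂ →
      ∫ y, h y ∂ν ≤ b₁ * V + b₂ * θ * V := by
    intro h b₁ b₂ hint hT' hall' hb₁ hb₂
    rw [← integral_add_compl hTm hint]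
    have e1 : ∫ y in T, h y ∂ν ≤ b₁ * (ν T).toReal := by
      calc ∫ y in T, h y ∂ν ≤ ∫ _ in T, b₁ ∂ν :=
            integral_mono_ae (hint.restrict) (integrable_const _) ((ae_restrict_iff' hTm).2 hT')
        _ = (ν T).toReal * b₁ := by rw [setIntegral_const, smul_eq_mul]; rfl
        _ = b₁ * (ν T).toReal := mul_comm _ _
    have e2 : ∫ y in Tᶜ, h y ∂ν ≤ b₂ * (ν Tᶜ).toReal := by
      calc ∫ y in Tᶜ, h y ∂ν ≤ ∫ _ in Tᶜ, b₂ ∂ν :=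
            integral_mono_ae (hint.restrict) (integrable_const _)
              ((ae_restrict_iff' hTm.compl).2 (hall'.mono fun y hy _ => hy))
        _ = (ν Tᶜ).toReal * b₂ := by rw [setIntegral_const, smul_eq_mul]; rfl
        _ = b₂ * (ν Tᶜ).toReal := mul_comm _ _
    have hTV : (ν T).toReal ≤ V :=
      ENNReal.toReal_mono (measure_ne_top ν _) (measure_mono (Set.subset_univ _))
    have := mul_le_mul_of_nonneg_left hfrac hb₂
    nlinarith [mul_le_mul_of_nonneg_left hTV hb₁]
  have havg1 : ∫ y, |g y - c| ∂ν ≤ (B₁ + B₂ * θ) * V := by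
    have := split _ B₁ B₂ h1 hT hall hB₁ hB₂
    linarith
  have havg2 : ∫ y, |g y - c| ^ 2 ∂ν ≤ (B₁^2 + B₂^2 * θ) * V := by
    have := split _ (B₁^2) (B₂^2) h2
      (hT.mono fun y hy hyT => by
        calc |g y - c| ^ 2 ≤ B₁ ^ 2 := pow_le_pow_left₀ (abs_nonneg _) (hy hyT) 2
          _ = B₁ ^ 2 := rfl)
      (hall.mono fun y hy => pow_le_pow_left₀ (abs_nonneg _) hy 2)
      (by positivity) (by positivity)
    linarith
  set m := ⨍ z, g z ∂ν with hmdef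
  set E := B₁ + B₂ * θ with hE
  have hEnn : 0 ≤ E := by positivity
  have hmc : |m - c| ≤ E := by
    have hsub : m - c = V⁻¹ * ∫ y, (g y - c) ∂ν := by
      rw [hmdef, average_eq, smul_eq_mul, integral_sub hgi (integrable_const c),
        integral_const, smul_eq_mul, show ν.real Set.univ = V from rfl]
      field_simp
    rw [hsub]
    calc |V⁻¹ * ∫ y, (g y - c) ∂ν| = V⁻¹ * |∫ y, (g y - c) ∂ν| := by
          rw [abs_mul, abs_of_nonneg (by positivity)]
      _ ≤ V⁻¹ * ∫ y, |g y - c| ∂ν := by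
          gcongr
          calc |∫ y, (g y - c) ∂ν| = ‖∫ y, (g y - c) ∂ν‖ := (Real.norm_eq_abs _).symm
            _ ≤ ∫ y, ‖g y - c‖ ∂ν := norm_integral_le_integral_norm _
            _ = ∫ y, |g y - c| ∂ν := by simp [Real.norm_eq_abs]
      _ ≤ V⁻¹ * (E * V) := by gcongr
      _ = E := by field_simp
  -- pointwise bound
  have hpt : ∀ᵐ y ∂ν, |g y - m| ^ 2 ≤ 2 * |g y - c| ^ 2 + 2 * E ^ 2 := by
    filter_upwards [hall] with y _
    have habs : |g y - m| ≤ |g y - c| + |c - m| := abs_sub_le _ _ _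
    have h1' : |g y - m| ^ 2 ≤ (|g y - c| + |c - m|) ^ 2 :=
      pow_le_pow_left₀ (abs_nonneg _) habs 2
    have h2' : |c - m| ≤ E := by rwa [abs_sub_comm]
    nlinarith [abs_nonneg (g y - c), abs_nonneg (c - m), sq_nonneg (|g y - c| - |c - m|)]
  have hint2 : Integrable (fun y => |g y - m| ^ 2) ν := by
    apply Integrable.mono' (integrable_const ((B₂ + E) ^ 2)) (hsm2 m)
    filter_upwards [hall] with y hy
    rw [Real.norm_eq_abs, abs_of_nonneg (by positivity)]
    apply pow_le_pow_left₀ (abs_nonneg _)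
    calc |g y - m| ≤ |g y - c| + |c - m| := abs_sub_le _ _ _
      _ ≤ B₂ + E := add_le_add hy (by rwa [abs_sub_comm])
  have key : ∫ y, |g y - m| ^ 2 ∂ν ≤ (2 * (B₁^2 + B₂^2*θ) + 2 * E^2) * V := by
    calc ∫ y, |g y - m| ^ 2 ∂ν ≤ ∫ y, (2 * |g y - c| ^ 2 + 2 * E ^ 2) ∂ν :=
          integral_mono_ae hint2 ((h2.const_mul 2).add (integrable_const _)) hpt
      _ = 2 * ∫ y, |g y - c| ^ 2 ∂ν + (2 * E ^ 2) * V := by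
          rw [integral_add (h2.const_mul 2) (integrable_const _), integral_const_mul,
            integral_const, smul_eq_mul, show ν.real Set.univ = V from rfl, mul_comm V _]
      _ ≤ (2 * (B₁^2 + B₂^2*θ) + 2 * E^2) * V := by nlinarith
  rw [average_eq, smul_eq_mul, show ν.real Set.univ = V from rfl]
  have hfin : V⁻¹ * ∫ y, |g y - m| ^ 2 ∂ν ≤ 2 * (B₁^2 + B₂^2*θ) + 2 * E^2 := by
    rw [inv_mul_le_iff₀ hVpos, mul_comm]
    exact key
  have hE2 : E ^ 2 ≤ 2*B₁^2 + 2*B₂^2*θ := by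
    rw [hE]
    nlinarith [sq_nonneg (B₁ - B₂*θ), mul_nonneg (sq_nonneg B₂) (mul_nonneg hθ (sub_nonneg.2 hθ1))]
  exact hfin.trans (by linarith)


lemma inner_ball {E : Type*} [NormedAddCommGroup E] [NormedSpace ℝ E] {x : E} {R σ : ℝ}
    (hx : ‖x‖ < R) (hσ : 0 < σ) (hσR : σ ≤ R) :
    ∃ x' : E, ball x' (σ/2) ⊆ ball x σ ∩ ball 0 R := by
  by_cases h : ‖x‖ ≤ σ/2
  · refine ⟨0, fun y hy => ?_⟩
    rw [mem_ball_zero_iff] at hy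
    constructor
    · rw [mem_ball, dist_eq_norm]
      calc ‖y - x‖ ≤ ‖y‖ + ‖x‖ := norm_sub_le _ _
        _ < σ/2 + σ/2 := by linarith
        _ = σ := by ring
    · rw [mem_ball_zero_iff]; linarith
  · push_neg at h
    have hx0 : x ≠ 0 := by intro h0; rw [h0, norm_zero] at h; linarith
    have hxn : 0 < ‖x‖ := norm_pos_iff.2 hx0
    set t : ℝ := (σ/2) / ‖x‖ with ht
    have ht0 : 0 < t := by positivity
    have ht1 : t < 1 := (div_lt_one hxn).2 h
    refine ⟨(1 - t) • x, fun y hy => ?_⟩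
    rw [mem_ball, dist_eq_norm] at hy
    have hxx' : ‖x - (1 - t) • x‖ = σ/2 := by
      have : x - (1 - t) • x = t • x := by
        rw [sub_smul, one_smul]; abel
      rw [this, norm_smul, Real.norm_eq_abs, abs_of_pos ht0, ht]
      field_simp
    have hx'n : ‖(1 - t) • x‖ = ‖x‖ - σ/2 := by
      rw [norm_smul, Real.norm_eq_abs, abs_of_pos (by linarith), sub_mul, one_mul, ht]
      field_simp
    constructor
    · rw [mem_ball, dist_eq_norm]
      calc ‖y - x‖ ≤ ‖y - (1 - t) • x‖ + ‖(1 - t) • x - x‖ := norm_sub_le_norm_sub_add_norm_sub _ _ _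
        _ < σ/2 + σ/2 := by
            rw [norm_sub_rev ((1-t) • x) x, hxx']
            linarith
        _ = σ := by ring
    · rw [mem_ball_zero_iff]
      calc ‖y‖ ≤ ‖y - (1 - t) • x‖ + ‖(1 - t) • x‖ := by
            simpa using norm_add_le (y - (1 - t) • x) ((1 - t) • x)
        _ < σ/2 + (‖x‖ - σ/2) := by rw [hx'n]; linarith
        _ = ‖x‖ := by ring
        _ < R := hx

set_option maxHeartbeats 1000000 in
theorem radial_vmo {n : ℕ} (R : ℝ) (hR : 0 < R) (f f' : ℝ → ℝ)
    (hderiv : ∀ x ∈ Set.Ioc (0:ℝ) R, HasDerivAt f (f' x) x)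
    (hderivc : ContinuousOn f' (Set.Ioc (0:ℝ) R))
    (hbdd : ∃ M : ℝ, ∀ x ∈ Set.Ioc (0:ℝ) R, |f x| ≤ M)
    (h3 : Tendsto (fun x => x * f' x) (nhdsWithin 0 (Set.Ioi 0)) (nhds 0)) :
    ∀ ε : ℝ, 0 < ε → ∃ r : ℝ, 0 < r ∧
      ∀ x ∈ ball (0 : EuclideanSpace ℝ (Fin n)) R, ∀ σ : ℝ, 0 < σ → σ < r →
        (⨍ y in ball x σ ∩ ball (0 : EuclideanSpace ℝ (Fin n)) R,
          |f ‖y‖ - ⨍ z in ball x σ ∩ ball (0 : EuclideanSpace ℝ (Fin n)) R, f ‖z‖| ^ 2)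
          ≤ ε := by
  obtain ⟨M, hM⟩ := hbdd
  have hM0 : 0 ≤ M := le_trans (abs_nonneg _) (hM R ⟨hR, le_refl R⟩)
  intro ε hε
  rcases Nat.eq_zero_or_pos n with hn | hn
  · subst hn
    refine ⟨1, one_pos, fun x hx σ hσ _ => ?_⟩
    haveI : Unique (EuclideanSpace ℝ (Fin 0)) := ⟨⟨0⟩, fun a => by ext i; exact i.elim0⟩
    have hsu : ball x σ ∩ ball (0 : EuclideanSpace ℝ (Fin 0)) R = Set.univ := by
      apply Set.eq_univ_of_forall
      intro y
      have hyx : y = x := Subsingleton.elim _ _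
      exact ⟨by simp [hyx, mem_ball, hσ], by rw [Subsingleton.elim y (0:EuclideanSpace ℝ (Fin 0))]; simp [mem_ball, hR]⟩
    rw [hsu]
    haveI : CompactSpace (EuclideanSpace ℝ (Fin 0)) := Finite.compactSpace
    haveI : IsFiniteMeasure (volume : Measure (EuclideanSpace ℝ (Fin 0))) := ⟨isCompact_univ.measure_lt_top⟩
    haveI : NeZero (volume : Measure (EuclideanSpace ℝ (Fin 0))) := ⟨by
      intro h0
      have := isOpen_univ.measure_pos (volume : Measure (EuclideanSpace ℝ (Fin 0))) ⟨(0:EuclideanSpace ℝ (Fin 0)), trivial⟩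
      rw [h0] at this; simp at this⟩
    rw [Measure.restrict_univ]
    have hconst : (⨍ z : EuclideanSpace ℝ (Fin 0), f ‖z‖ ∂volume) = f ‖(0:EuclideanSpace ℝ (Fin 0))‖ := by
      rw [show (fun z : EuclideanSpace ℝ (Fin 0) => f ‖z‖) = fun _ => f ‖(0:EuclideanSpace ℝ (Fin 0))‖ from
        funext fun z => by rw [Subsingleton.elim z (0:EuclideanSpace ℝ (Fin 0))]]
      exact average_const _ _
    rw [show (fun y : EuclideanSpace ℝ (Fin 0) => |f ‖y‖ - ⨍ z : EuclideanSpace ℝ (Fin 0), f ‖z‖ ∂volume| ^ 2) = fun _ => (0:ℝ) from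
      funext fun y => by rw [Subsingleton.elim y (0:EuclideanSpace ℝ (Fin 0)), hconst]; simp]
    rw [average_const]
    exact le_of_lt hε

  -- main case n ≥ 1
  set L : ℝ := max 2 (Real.log (48 * (M+1)^2 * 6^n / ε)) with hLdef
  have hL2 : (2:ℝ) ≤ L := le_max_left _ _
  have hL0 : 0 < L := lt_of_lt_of_le two_pos hL2
  have hexpL : Real.exp (-L) ≤ ε / (48 * (M+1)^2 * 6^n) := by
    have h1 : Real.log (48 * (M+1)^2 * 6^n / ε) ≤ L := le_max_right _ _
    have h2 : Real.exp (-L) ≤ Real.exp (-(Real.log (48 * (M+1)^2 * 6^n / ε))) :=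
      Real.exp_le_exp.2 (neg_le_neg h1)
    rwa [Real.exp_neg (Real.log _), Real.exp_log (by positivity), inv_div] at h2
  have hθhalf : 24 * M^2 * 6^n * Real.exp (-L) ≤ ε/2 := by
    calc 24*M^2*6^n*Real.exp (-L) ≤ 24*(M+1)^2*6^n*(ε/(48*(M+1)^2*6^n)) := by
          apply mul_le_mul (by nlinarith [pow_pos (by norm_num : (0:ℝ) < 6) n])
            hexpL (Real.exp_nonneg _) (by positivity)
      _ = ε/2 := by field_simp; ring
  set ε' : ℝ := Real.sqrt (ε/12) / L with hε'def
  have hε'0 : 0 < ε' := div_pos (Real.sqrt_pos.2 (by positivity)) hL0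
  have hε'L : (ε' * L)^2 = ε/12 := by
    rw [hε'def, div_mul_cancel₀ _ (ne_of_gt hL0), Real.sq_sqrt (by positivity)]
  obtain ⟨δ₀, hδ₀, hδ₀p⟩ := Metric.tendsto_nhdsWithin_nhds.1 h3 ε' hε'0
  set δ : ℝ := min (δ₀/2) R with hδdef
  have hδ0 : 0 < δ := lt_min (by linarith) hR
  have hδR : δ ≤ R := min_le_right _ _
  have hf'small : ∀ t ∈ Set.Ioc (0:ℝ) δ, |f' t| ≤ ε' * t⁻¹ := by
    intro t ht
    have hδhalf : δ ≤ δ₀/2 := min_le_left _ _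
    have h1 : dist t 0 < δ₀ := by
      rw [Real.dist_eq, sub_zero, abs_of_pos ht.1]
      linarith [ht.2]
    have h2 := hδ₀p ht.1 h1
    rw [Real.dist_eq, sub_zero, abs_mul, abs_of_pos ht.1] at h2
    rw [show ε' * t⁻¹ = ε'/t from (div_eq_mul_inv ε' t).symm, le_div_iff₀ ht.1, mul_comm]
    exact h2.le
  have hsub3 : Set.Icc (δ/3) R ⊆ Set.Ioc (0:ℝ) R :=
    fun t ht => ⟨lt_of_lt_of_le (by linarith) ht.1, ht.2⟩
  obtain ⟨K, hK⟩ := (isCompact_Icc (a := δ/3) (b := R)).exists_bound_of_continuousOn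
    (hderivc.mono hsub3)
  set K' : ℝ := max K 0 with hK'def
  have hK'0 : (0:ℝ) ≤ K' := le_max_right _ _
  have hK'b : ∀ t ∈ Set.Icc (δ/3) R, |f' t| ≤ K' := fun t ht =>
    le_trans (le_trans (le_of_eq (Real.norm_eq_abs _).symm) (hK t ht)) (le_max_left _ _)
  set r : ℝ := min (δ/3) (Real.sqrt (ε/24) / (K'+1)) with hrdef
  have hr0 : 0 < r := lt_min (by linarith) (div_pos (Real.sqrt_pos.2 (by positivity)) (by linarith))
  refine ⟨r, hr0, ?_⟩
  intro x hx σ hσ hσr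
  haveI hnt : Nontrivial (EuclideanSpace ℝ (Fin n)) := by
    have hfr : Module.finrank ℝ (EuclideanSpace ℝ (Fin n)) = n := finrank_euclideanSpace_fin
    exact Module.nontrivial_of_finrank_pos (hfr ▸ hn)
  set s := ball x σ ∩ ball (0 : EuclideanSpace ℝ (Fin n)) R with hsdef
  have hsm : MeasurableSet s := (isOpen_ball.inter isOpen_ball).measurableSet
  haveI : IsFiniteMeasure (volume.restrict s) := ⟨by
    rw [Measure.restrict_apply_univ]
    exact lt_of_le_of_lt (measure_mono Set.inter_subset_left) measure_ball_lt_top⟩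
  have hxR : ‖x‖ < R := by rwa [mem_ball_zero_iff] at hx
  have hσδ : σ < δ/3 := lt_of_lt_of_le hσr (min_le_left _ _)
  have hfc : ContinuousOn f (Set.Ioc 0 R) :=
    fun t ht => ((hderiv t ht).continuousAt).continuousWithinAt
  have hnull : volume ({(0:EuclideanSpace ℝ (Fin n))} : Set (EuclideanSpace ℝ (Fin n))) = 0 := by
    rw [show ({(0:EuclideanSpace ℝ (Fin n))} : Set (EuclideanSpace ℝ (Fin n)))
        = closedBall 0 0 from closedBall_zero.symm,
      Measure.addHaar_closedBall volume 0 le_rfl, finrank_euclideanSpace_fin,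
      zero_pow hn.ne']
    simp
  have hae0 : ∀ᵐ y ∂volume.restrict s, y ≠ (0:EuclideanSpace ℝ (Fin n)) := by
    rw [ae_iff]
    have hset : {y : EuclideanSpace ℝ (Fin n) | ¬ y ≠ 0} = ({0} : Set (EuclideanSpace ℝ (Fin n))) := by ext y; simp
    rw [hset, Measure.restrict_apply (measurableSet_singleton _)]
    exact measure_mono_null Set.inter_subset_left hnull
  have hmeasu : AEStronglyMeasurable (fun y : EuclideanSpace ℝ (Fin n) => f ‖y‖)
      (volume.restrict s) := by
    have h0 : ∀ᵐ y : EuclideanSpace ℝ (Fin n) ∂volume, y ≠ 0 := by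
      rw [ae_iff]
      have hset : {y : EuclideanSpace ℝ (Fin n) | ¬ y ≠ 0} = ({0} : Set (EuclideanSpace ℝ (Fin n))) := by ext y; simp
      rw [hset]; exact hnull
    have hseq : s =ᵐ[volume] (s \ {0} : Set (EuclideanSpace ℝ (Fin n))) := by
      apply Filter.eventuallyEq_set.2
      filter_upwards [h0] with y hy
      exact ⟨fun h => ⟨h, by simp [hy]⟩, fun h => h.1⟩
    rw [Measure.restrict_congr_set hseq]
    apply AEMeasurable.aestronglyMeasurable
    apply ContinuousOn.aemeasurable
    · apply hfc.comp continuous_norm.continuousOn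
      intro y hy
      exact ⟨norm_pos_iff.2 hy.2, le_of_lt (mem_ball_zero_iff.1 hy.1.2)⟩
    · exact hsm.diff (measurableSet_singleton _)
  by_cases hcase : ‖x‖ + σ ≤ δ
  · -- Case A : near the origin
    set b : ℝ := min (‖x‖ + σ) R with hbdef
    have hb0 : 0 < b := lt_min (by linarith [norm_nonneg x]) hR
    have hbδ : b ≤ δ := le_trans (min_le_left _ _) hcase
    have hbR : b ≤ R := min_le_right _ _
    set ρ : ℝ := b * Real.exp (-L) with hρdef
    have hρ0 : 0 < ρ := by positivity
    set T := {y : EuclideanSpace ℝ (Fin n) | ρ < ‖y‖} with hTdef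
    have hTmeas : MeasurableSet T := measurableSet_lt measurable_const measurable_norm
    have hyb : ∀ y ∈ s, ‖y‖ < b := by
      intro y hy
      apply lt_min ?_ (mem_ball_zero_iff.1 hy.2)
      have h1 : ‖y - x‖ < σ := mem_ball_iff_norm.1 hy.1
      calc ‖y‖ = ‖(y - x) + x‖ := by simp
        _ ≤ ‖y - x‖ + ‖x‖ := norm_add_le _ _
        _ < ‖x‖ + σ := by linarith
    have hTbound : ∀ y ∈ s, y ∈ T → |f ‖y‖ - f b| ≤ ε' * L := by
      intro y hy hyT
      have hy0 : 0 < ‖y‖ := lt_trans hρ0 hyT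
      have hyb' : ‖y‖ ≤ b := (hyb y hy).le
      have hIcc : Set.Icc ‖y‖ b ⊆ Set.Ioc (0:ℝ) δ :=
        fun t ht => ⟨lt_of_lt_of_le hy0 ht.1, le_trans ht.2 hbδ⟩
      have hIccR : Set.Icc ‖y‖ b ⊆ Set.Ioc (0:ℝ) R :=
        fun t ht => (Set.Ioc_subset_Ioc_right hδR) (hIcc ht)
      have h1 := log_bound hy0 hyb' (fun t ht => hderiv t (hIccR ht)) (hderivc.mono hIccR)
        (fun t ht => hf'small t (hIcc ht))
      have hlog : Real.log (b / ‖y‖) ≤ L := by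
        have hd : b / ‖y‖ ≤ Real.exp L := by
          rw [div_le_iff₀ hy0]
          calc b = ρ * Real.exp L := by
                rw [hρdef, mul_assoc, ← Real.exp_add]
                simp
            _ ≤ ‖y‖ * Real.exp L := mul_le_mul_of_nonneg_right hyT.le (Real.exp_nonneg _)
            _ = Real.exp L * ‖y‖ := mul_comm _ _
        calc Real.log (b/‖y‖) ≤ Real.log (Real.exp L) := Real.log_le_log (by positivity) hd
          _ = L := Real.log_exp L
      rw [abs_sub_comm]
      calc |f b - f ‖y‖| ≤ ε' * Real.log (b/‖y‖) := h1
        _ ≤ ε' * L := mul_le_mul_of_nonneg_left hlog hε'0.le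
    have hallb : ∀ᵐ y ∂volume.restrict s, |f ‖y‖ - f b| ≤ 2*M := by
      filter_upwards [ae_restrict_mem hsm, hae0] with y hy hy0
      have h1 : |f ‖y‖| ≤ M := hM _ ⟨norm_pos_iff.2 hy0, (mem_ball_zero_iff.1 hy.2).le⟩
      have h2 : |f b| ≤ M := hM b ⟨hb0, hbR⟩
      have h3 : |f ‖y‖ - f b| ≤ |f ‖y‖| + |f b| := abs_sub _ _
      linarith
    set θ : ℝ := min 1 (6^n * Real.exp (-L)) with hθdef
    have hθ0 : 0 ≤ θ := le_min zero_le_one (by positivity)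
    have hθ1 : θ ≤ 1 := min_le_left _ _
    have hfrac : ((volume.restrict s) Tᶜ).toReal ≤ θ * ((volume.restrict s) Set.univ).toReal := by
      have htriv : ((volume.restrict s) Tᶜ).toReal ≤ ((volume.restrict s) Set.univ).toReal :=
        ENNReal.toReal_mono (measure_ne_top _ _) (measure_mono (Set.subset_univ _))
      have hVnn : 0 ≤ ((volume.restrict s) Set.univ).toReal := ENNReal.toReal_nonneg
      by_cases hxnear : ‖x‖ < 2*σ
      · obtain ⟨x', hx'⟩ := inner_ball hxR hσ (by linarith : σ ≤ R)
        have hlow : volume (ball x' (σ/2)) ≤ (volume.restrict s) Set.univ := by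
          rw [Measure.restrict_apply_univ]
          exact measure_mono hx'
        have hup : (volume.restrict s) Tᶜ ≤ volume (closedBall (0:EuclideanSpace ℝ (Fin n)) ρ) := by
          rw [Measure.restrict_apply hTmeas.compl]
          apply measure_mono
          intro y hy
          rw [mem_closedBall_zero_iff]
          exact le_of_not_gt hy.1
        rw [Measure.addHaar_closedBall volume 0 hρ0.le, finrank_euclideanSpace_fin] at hup
        have hballform := Measure.addHaar_ball volume x' (by positivity : (0:ℝ) ≤ σ/2)
        rw [finrank_euclideanSpace_fin] at hballform
        set c₁ : ℝ := (volume (ball (0:EuclideanSpace ℝ (Fin n)) 1)).toReal with hc₁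
        have hc₁0 : 0 < c₁ :=
          ENNReal.toReal_pos (measure_ball_pos volume _ one_pos).ne' measure_ball_lt_top.ne
        have hupR : ((volume.restrict s) Tᶜ).toReal ≤ ρ^n * c₁ := by
          have h := ENNReal.toReal_mono
            (ENNReal.mul_ne_top ENNReal.ofReal_ne_top measure_ball_lt_top.ne) hup
          rwa [ENNReal.toReal_mul, ENNReal.toReal_ofReal (by positivity)] at h
        have hlowR : (σ/2)^n * c₁ ≤ ((volume.restrict s) Set.univ).toReal := by
          have h := ENNReal.toReal_mono (measure_ne_top _ _) hlow
          rwa [hballform, ENNReal.toReal_mul, ENNReal.toReal_ofReal (by positivity)] at h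
        have hρσ : ρ^n ≤ (6^n * Real.exp (-L)) * (σ/2)^n := by
          have h1 : ρ ≤ (6 * Real.exp (-L)) * (σ/2) := by
            have hb3 : b ≤ 3*σ := le_trans (min_le_left _ _) (by linarith)
            rw [hρdef]
            calc b * Real.exp (-L) ≤ (3*σ) * Real.exp (-L) :=
                  mul_le_mul_of_nonneg_right hb3 (Real.exp_nonneg _)
              _ = (6 * Real.exp (-L)) * (σ/2) := by ring
          have hexp1 : Real.exp (-L) ≤ 1 := by
            rw [show (1:ℝ) = Real.exp 0 from (Real.exp_zero).symm]
            exact Real.exp_le_exp.2 (by linarith)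
          calc ρ^n ≤ ((6*Real.exp (-L)) * (σ/2))^n := pow_le_pow_left₀ hρ0.le h1 n
            _ = (6*Real.exp (-L))^n * (σ/2)^n := mul_pow _ _ _
            _ ≤ (6^n * Real.exp (-L)) * (σ/2)^n := by
                apply mul_le_mul_of_nonneg_right ?_ (by positivity)
                rw [mul_pow]
                apply mul_le_mul_of_nonneg_left ?_ (by positivity)
                calc (Real.exp (-L))^n ≤ (Real.exp (-L))^1 :=
                      pow_le_pow_of_le_one (Real.exp_nonneg _) hexp1 hn
                  _ = Real.exp (-L) := pow_one _
        rcases le_total (1:ℝ) (6^n * Real.exp (-L)) with h | h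
        · rw [hθdef, min_eq_left h, one_mul]; exact htriv
        · rw [hθdef, min_eq_right h]
          calc ((volume.restrict s) Tᶜ).toReal ≤ ρ^n * c₁ := hupR
            _ ≤ ((6^n * Real.exp (-L)) * (σ/2)^n) * c₁ :=
                mul_le_mul_of_nonneg_right hρσ hc₁0.le
            _ = (6^n * Real.exp (-L)) * ((σ/2)^n * c₁) := by ring
            _ ≤ (6^n * Real.exp (-L)) * ((volume.restrict s) Set.univ).toReal :=
                mul_le_mul_of_nonneg_left hlowR (by positivity)
      · push_neg at hxnear
        have hsT : s ⊆ T := by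
          intro y hy
          have hyx : |‖y‖ - ‖x‖| < σ :=
            lt_of_le_of_lt (abs_norm_sub_norm_le y x) (mem_ball_iff_norm.1 hy.1)
          have h1 : ‖x‖ - σ < ‖y‖ := by
            have := (abs_lt.1 hyx).1
            linarith
          have he : Real.exp (-L) ≤ 1/3 := by
            have h3 : (3:ℝ) ≤ Real.exp L := by
              calc (3:ℝ) = 2 + 1 := by norm_num
                _ ≤ Real.exp 2 := Real.add_one_le_exp 2
                _ ≤ Real.exp L := Real.exp_le_exp.2 hL2
            rw [Real.exp_neg]
            calc (Real.exp L)⁻¹ ≤ 3⁻¹ := by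
                  apply inv_anti₀ (by norm_num) h3
              _ = 1/3 := by norm_num
          have h2 : ρ ≤ ‖x‖ - σ := by
            have hb' : b ≤ ‖x‖ + σ := min_le_left _ _
            calc ρ = b * Real.exp (-L) := rfl
              _ ≤ (‖x‖+σ) * (1/3) :=
                  mul_le_mul hb' he (Real.exp_nonneg _) (by linarith [norm_nonneg x])
              _ ≤ ‖x‖ - σ := by nlinarith
          exact lt_of_le_of_lt h2 h1
        have hzero : (volume.restrict s) Tᶜ = 0 := by
          rw [Measure.restrict_apply hTmeas.compl]
          have hempty : Tᶜ ∩ s = ∅ := by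
            ext y
            simp only [Set.mem_inter_iff, Set.mem_compl_iff, Set.mem_empty_iff_false, iff_false]
            rintro ⟨hyT, hys⟩
            exact hyT (hsT hys)
          rw [hempty, measure_empty]
        rw [hzero]
        simp
        positivity
    refine le_trans (osc_le (volume.restrict s) hmeasu (c := f b) (B₁ := ε'*L) (B₂ := 2*M)
      (θ := θ) (by positivity) (by linarith) hθ0 hθ1 hTmeas
      ((ae_restrict_mem hsm).mono fun y hy hyT => hTbound y hy hyT) hallb hfrac) ?_
    have h2 : 6*(2*M)^2*θ ≤ ε/2 := by
      have hh : θ ≤ 6^n * Real.exp (-L) := min_le_right _ _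
      calc 6*(2*M)^2*θ ≤ 6*(2*M)^2*(6^n*Real.exp (-L)) :=
            mul_le_mul_of_nonneg_left hh (by positivity)
        _ = 24*M^2*6^n*Real.exp (-L) := by ring
        _ ≤ ε/2 := hθhalf
    have h1 : 6*(ε'*L)^2 = ε/2 := by rw [hε'L]; ring
    linarith
  · -- Case B : away from the origin
    push_neg at hcase
    have hxl : δ/3 < ‖x‖ - σ := by linarith
    have hxmem : ‖x‖ ∈ Set.Icc (δ/3) R := ⟨by linarith, hxR.le⟩
    have hlip : ∀ a ∈ Set.Icc (δ/3) R, ∀ c ∈ Set.Icc (δ/3) R, |f c - f a| ≤ K' * |c - a| := by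
      have key : ∀ a ∈ Set.Icc (δ/3) R, ∀ c ∈ Set.Icc (δ/3) R, a ≤ c → |f c - f a| ≤ K' * |c - a| := by
        intro a ha c hc hac
        have hsub : Set.Icc a c ⊆ Set.Icc (δ/3) R := Set.Icc_subset_Icc ha.1 hc.2
        have h := lip_bound hac (fun t ht => hderiv t (hsub3 (hsub ht)))
          (hderivc.mono (subset_trans hsub hsub3)) (fun t ht => hK'b t (hsub ht))
        rw [abs_of_nonneg (by linarith : (0:ℝ) ≤ c - a)]
        exact h
      intro a ha c hc
      rcases le_total a c with hac | hac
      · exact key a ha c hc hac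
      · rw [abs_sub_comm (f c), abs_sub_comm c]
        exact key c hc a ha hac
    have hbound : ∀ y ∈ s, |f ‖y‖ - f ‖x‖| ≤ K' * σ := by
      intro y hy
      have hyx : |‖y‖ - ‖x‖| < σ :=
        lt_of_le_of_lt (abs_norm_sub_norm_le y x) (mem_ball_iff_norm.1 hy.1)
      have h1 := (abs_lt.1 hyx).1
      have hymem : ‖y‖ ∈ Set.Icc (δ/3) R := ⟨by linarith, (mem_ball_zero_iff.1 hy.2).le⟩
      calc |f ‖y‖ - f ‖x‖| ≤ K' * |‖y‖ - ‖x‖| := hlip _ hxmem _ hymem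
        _ ≤ K' * σ := mul_le_mul_of_nonneg_left hyx.le hK'0
    refine le_trans (osc_le (volume.restrict s) hmeasu (c := f ‖x‖) (B₁ := K'*σ) (B₂ := K'*σ)
      (θ := 0) (by positivity) (by positivity) le_rfl zero_le_one (T := Set.univ)
      MeasurableSet.univ
      ((ae_restrict_mem hsm).mono fun y hy _ => hbound y hy)
      ((ae_restrict_mem hsm).mono fun y hy => hbound y hy) (by simp)) ?_
    have hσ2 : K'*σ ≤ Real.sqrt (ε/24) := by
      calc K'*σ ≤ K' * (Real.sqrt (ε/24)/(K'+1)) :=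
            mul_le_mul_of_nonneg_left (le_of_lt (lt_of_lt_of_le hσr (min_le_right _ _))) hK'0
        _ ≤ (K'+1) * (Real.sqrt (ε/24)/(K'+1)) :=
            mul_le_mul_of_nonneg_right (by linarith) (by positivity)
        _ = Real.sqrt (ε/24) := by field_simp
    have hsq : (K'*σ)^2 ≤ ε/24 := by
      rw [show ε/24 = (Real.sqrt (ε/24))^2 from (Real.sq_sqrt (by positivity)).symm]
      exact pow_le_pow_left₀ (by positivity) hσ2 2
    linarith
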